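/- Let K be a natural number, let \eta_{-1}, \eta_0, \eta_1, ..., \eta_K be positive reals, let s > 0, \mu > 0, C_I > 0 and \varepsilon > 0, and define F_k := (\eta_k^{-s} + \eta_{k-1}^{-s}) \eta_{k-1}^{-1} and G_K := \sum_{k=0}^{K} F_k^{\mu/(\mu+1)} \eta_{k-1}. Then for every choice of positive real numbers M_0, M_1, ..., M_K satisfying the constraint \sum_{k=0}^{K} C_I M_{K-k}^{-\mu} \eta_{k-1} \le \varepsilon / 2, the cost satisfies \sum_{k=0}^{K} M_{K-k} (\eta_k^{-s} + \eta_{k-1}^{-s}) \ge (2 C_I)^{1/\mu} G_K^{(\mu+1)/\mu} \varepsilon^{-1/\mu}. -/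

import Mathlib

open Finset

private lemma rpow_split_aux {a c w μ : ℝ} (ha : 0 < a) (hc : 0 < c) (hw : 0 < w)
    (hμ : 0 < μ) :
    (a * c) ^ (μ / (μ + 1)) * (a ^ (-μ) * w) ^ (1 / (μ + 1)) =
      (c * w⁻¹) ^ (μ / (μ + 1)) * w := by
  have hμ1 : μ + 1 ≠ 0 := by positivity
  have ht : -μ * (1 / (μ + 1)) = -(μ / (μ + 1)) := by field_simp
  have haa : a ^ (μ / (μ + 1)) * a ^ (-(μ / (μ + 1))) = 1 := by
    rw [← Real.rpow_add ha]; simp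
  have hww : w ^ (-(μ / (μ + 1))) * w = w ^ (1 / (μ + 1)) := by
    nth_rewrite 2 [← Real.rpow_one w]
    rw [← Real.rpow_add hw]
    congr 1
    field_simp
    ring
  rw [Real.mul_rpow ha.le hc.le,
      Real.mul_rpow (Real.rpow_nonneg ha.le _) hw.le,
      ← Real.rpow_mul ha.le, ht,
      Real.mul_rpow hc.le (inv_pos.mpr hw).le,
      Real.inv_rpow hw.le, ← Real.rpow_neg hw.le, ← hww]
  linear_combination c ^ (μ / (μ + 1)) * (w ^ (-(μ / (μ + 1))) * w) * haa

/-- Optimality of the Lagrange sample numbers: any positive real sample numbers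
satisfying the stochastic error budget constraint incur at least the optimal cost. -/
theorem optimal_cost_lower_bound
    (K : ℕ) (η : ℤ → ℝ) (s μ CI ε : ℝ)
    (hη : ∀ k : ℤ, -1 ≤ k → k ≤ K → 0 < η k)
    (hs : 0 < s) (hμ : 0 < μ) (hCI : 0 < CI) (hε : 0 < ε)
    (F : ℕ → ℝ)
    (hF : ∀ k : ℕ,
      F k = (η (k : ℤ) ^ (-s) + η ((k : ℤ) - 1) ^ (-s)) * (η ((k : ℤ) - 1))⁻¹)
    (G : ℝ)
    (hG : G = ∑ k ∈ range (K + 1), F k ^ (μ / (μ + 1)) * η ((k : ℤ) - 1))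
    (M : ℕ → ℝ) (hM : ∀ k ≤ K, 0 < M k)
    (hconstraint :
      ∑ k ∈ range (K + 1), CI * M (K - k) ^ (-μ) * η ((k : ℤ) - 1) ≤ ε / 2) :
    (2 * CI) ^ (1 / μ) * G ^ ((μ + 1) / μ) * ε ^ (-(1 / μ)) ≤
      ∑ k ∈ range (K + 1),
        M (K - k) * (η (k : ℤ) ^ (-s) + η ((k : ℤ) - 1) ^ (-s)) := by
  have hμ1 : (0:ℝ) < μ + 1 := by linarith
  have hw : ∀ k ∈ range (K + 1), (0:ℝ) < η ((k : ℤ) - 1) := by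
    intro k hk
    rw [mem_range] at hk
    exact hη _ (by omega) (by omega)
  have hη' : ∀ k ∈ range (K + 1), (0:ℝ) < η (k : ℤ) := by
    intro k hk
    rw [mem_range] at hk
    exact hη _ (by omega) (by omega)
  have hc : ∀ k ∈ range (K + 1),
      (0:ℝ) < η (k : ℤ) ^ (-s) + η ((k : ℤ) - 1) ^ (-s) := by
    intro k hk
    have h1 := hη' k hk
    have h2 := hw k hk
    positivity
  have ha : ∀ k ∈ range (K + 1), (0:ℝ) < M (K - k) :=
    fun k _ => hM _ (Nat.sub_le _ _)
  -- conjugate exponents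
  have hpq : ((μ + 1) / μ).HolderConjugate (μ + 1) := by
    rw [Real.holderConjugate_iff]
    constructor
    · rw [lt_div_iff₀ hμ]; linarith
    · rw [inv_div]
      field_simp
  -- Hölder
  have holder := Real.inner_le_Lp_mul_Lq_of_nonneg (s := range (K + 1))
      (f := fun k => (M (K - k) * (η (k : ℤ) ^ (-s) + η ((k : ℤ) - 1) ^ (-s)))
        ^ (μ / (μ + 1)))
      (g := fun k => (M (K - k) ^ (-μ) * η ((k : ℤ) - 1)) ^ (1 / (μ + 1)))
      hpq
      (fun i hi => Real.rpow_nonneg (mul_nonneg (ha i hi).le (hc i hi).le) _)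
      (fun i hi => Real.rpow_nonneg
        (mul_nonneg (Real.rpow_nonneg (ha i hi).le _) (hw i hi).le) _)
  set C : ℝ := ∑ k ∈ range (K + 1),
      M (K - k) * (η (k : ℤ) ^ (-s) + η ((k : ℤ) - 1) ^ (-s)) with hCdef
  set S : ℝ := ∑ k ∈ range (K + 1), M (K - k) ^ (-μ) * η ((k : ℤ) - 1) with hSdef
  have e1 : ∑ k ∈ range (K + 1),
      (M (K - k) * (η (k : ℤ) ^ (-s) + η ((k : ℤ) - 1) ^ (-s))) ^ (μ / (μ + 1)) *
        (M (K - k) ^ (-μ) * η ((k : ℤ) - 1)) ^ (1 / (μ + 1)) = G := by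
    rw [hG]
    refine sum_congr rfl fun k hk => ?_
    rw [hF k]
    exact rpow_split_aux (ha k hk) (hc k hk) (hw k hk) hμ
  have e2 : ∑ k ∈ range (K + 1),
      ((M (K - k) * (η (k : ℤ) ^ (-s) + η ((k : ℤ) - 1) ^ (-s))) ^ (μ / (μ + 1)))
        ^ ((μ + 1) / μ) = C := by
    refine sum_congr rfl fun k hk => ?_
    rw [← Real.rpow_mul (mul_nonneg (ha k hk).le (hc k hk).le)]
    rw [show μ / (μ + 1) * ((μ + 1) / μ) = 1 by field_simp, Real.rpow_one]
  have e3 : ∑ k ∈ range (K + 1),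
      ((M (K - k) ^ (-μ) * η ((k : ℤ) - 1)) ^ (1 / (μ + 1))) ^ (μ + 1) = S := by
    refine sum_congr rfl fun k hk => ?_
    rw [← Real.rpow_mul
        (mul_nonneg (Real.rpow_nonneg (ha k hk).le _) (hw k hk).le)]
    rw [show 1 / (μ + 1) * (μ + 1) = 1 by field_simp, Real.rpow_one]
  rw [e1, e2, e3, one_div_div] at holder
  -- holder : G ≤ C ^ (μ/(μ+1)) * S ^ (1/(μ+1))
  have hCpos : 0 < C := by
    refine sum_pos (fun k hk => mul_pos (ha k hk) (hc k hk)) ?_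
    exact nonempty_range_iff.mpr (Nat.succ_ne_zero K)
  have hSpos : 0 < S := by
    refine sum_pos (fun k hk =>
      mul_pos (Real.rpow_pos_of_pos (ha k hk) _) (hw k hk)) ?_
    exact nonempty_range_iff.mpr (Nat.succ_ne_zero K)
  have hGpos : 0 < G := by
    rw [hG]
    refine sum_pos (fun k hk => ?_) (nonempty_range_iff.mpr (Nat.succ_ne_zero K))
    have hFk : 0 < F k := by
      rw [hF k]
      exact mul_pos (hc k hk) (inv_pos.mpr (hw k hk))
    exact mul_pos (Real.rpow_pos_of_pos hFk _) (hw k hk)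
  -- constraint gives S ≤ ε / (2 * CI)
  have hS : S ≤ ε / (2 * CI) := by
    rw [le_div_iff₀ (by positivity), hSdef]
    calc (∑ k ∈ range (K + 1), M (K - k) ^ (-μ) * η ((k : ℤ) - 1)) * (2 * CI)
        = 2 * ∑ k ∈ range (K + 1), CI * M (K - k) ^ (-μ) * η ((k : ℤ) - 1) := by
          rw [sum_mul, mul_sum]
          exact sum_congr rfl fun k _ => by ring
      _ ≤ 2 * (ε / 2) := by linarith
      _ = ε := by ring
  -- raise Hölder to the power (μ+1)/μ
  have hmain : G ^ ((μ + 1) / μ) ≤ C * S ^ (1 / μ) := by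
    have h := Real.rpow_le_rpow hGpos.le holder (by positivity :
        (0:ℝ) ≤ (μ + 1) / μ)
    calc G ^ ((μ + 1) / μ)
        ≤ (C ^ (μ / (μ + 1)) * S ^ (1 / (μ + 1))) ^ ((μ + 1) / μ) := h
      _ = C * S ^ (1 / μ) := by
          rw [Real.mul_rpow (Real.rpow_nonneg hCpos.le _)
              (Real.rpow_nonneg hSpos.le _),
            ← Real.rpow_mul hCpos.le, ← Real.rpow_mul hSpos.le,
            show μ / (μ + 1) * ((μ + 1) / μ) = 1 by field_simp,
            show 1 / (μ + 1) * ((μ + 1) / μ) = 1 / μ by field_simp,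
            Real.rpow_one]
  -- conclude
  have hSr : (2 * CI) ^ (1 / μ) * ε ^ (-(1 / μ)) ≤ (S ^ (1 / μ))⁻¹ := by
    have h1 : S ^ (1 / μ) ≤ (ε / (2 * CI)) ^ (1 / μ) :=
      Real.rpow_le_rpow hSpos.le hS (by positivity)
    have h2 : ((ε / (2 * CI)) ^ (1 / μ))⁻¹ ≤ (S ^ (1 / μ))⁻¹ := by
      apply inv_anti₀ (Real.rpow_pos_of_pos hSpos _) h1
    refine le_trans (le_of_eq ?_) h2
    rw [Real.div_rpow hε.le (by positivity), Real.rpow_neg hε.le]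
    field_simp
  have hfinal : (2 * CI) ^ (1 / μ) * G ^ ((μ + 1) / μ) * ε ^ (-(1 / μ))
      ≤ G ^ ((μ + 1) / μ) * (S ^ (1 / μ))⁻¹ := by
    have := mul_le_mul_of_nonneg_left hSr (Real.rpow_nonneg hGpos.le ((μ + 1) / μ))
    calc (2 * CI) ^ (1 / μ) * G ^ ((μ + 1) / μ) * ε ^ (-(1 / μ))
        = G ^ ((μ + 1) / μ) * ((2 * CI) ^ (1 / μ) * ε ^ (-(1 / μ))) := by ring
      _ ≤ G ^ ((μ + 1) / μ) * (S ^ (1 / μ))⁻¹ := this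
  refine le_trans hfinal ?_
  rw [mul_inv_le_iff₀ (Real.rpow_pos_of_pos hSpos _)]
  linarith [hmain]
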